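/- Let C_1, …, C_m ⊆ ℝⁿ be closed convex sets with C := ∩_{i=1}^m C_i ≠ ∅. Let {s^k} be generated by s^{k+1} := P_{C_{r(k)}}(P_{C_{ℓ(k)}}(s^k)) from some s^0 ∈ ℝⁿ, where for every k, dist(s^k, C_{ℓ(k)}) ≥ dist(s^k, C_i) for all i and dist(P_{C_{ℓ(k)}}(s^k), C_{r(k)}) ≥ dist(P_{C_{ℓ(k)}}(s^k), C_i) for all i. Assume s^k → s̄ ∈ C and that EB1 holds at s̄ with constant ω ∈ (0,1). Then the sequence {dist(s^k, C)} converges Q-linearly to 0 with asymptotic constant at most β², where β := √(1 − ω²); in particular limsup_{k→∞} dist(s^{k+1}, C)/dist(s^k, C) ≤ β². -/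

import Mathlib

noncomputable section

open Filter Metric RealInnerProductSpace

/-- Euclidean space ℝⁿ. -/
abbrev Euc (n : ℕ) := EuclideanSpace ℝ (Fin n)

/-- `P` is the metric projection onto `A`: `P x` is a point of `A` nearest to `x`. -/
def IsProjection {n : ℕ} (A : Set (Euc n)) (P : Euc n → Euc n) : Prop :=
  ∀ x, P x ∈ A ∧ ∀ a ∈ A, ‖x - P x‖ ≤ ‖x - a‖

/-- Reflection `R_A = 2 P_A - Id`, given the projection `P = P_A`. -/
def reflect {n : ℕ} (P : Euc n → Euc n) (x : Euc n) : Euc n := (2 : ℝ) • P x - x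

/-- `Z̄_{A,B} = Z̃_{A,B} ∘ Z_{A,B}`, where `Z_{A,B} = P_A ∘ P_B` and
`Z̃_{A,B} = (1/2)(P_A + P_B)`. -/
def Zbar {n : ℕ} (PA PB : Euc n → Euc n) (x : Euc n) : Euc n :=
  (2⁻¹ : ℝ) • (PA (PA (PB x)) + PB (PA (PB x)))

/-- `c` is the circumcenter of `w`, `R_A w`, `R_B w`: it lies in the affine hull of these
three points and is equidistant from them. -/
def IsCircumcenter {n : ℕ} (PA PB : Euc n → Euc n) (w c : Euc n) : Prop :=
  c ∈ affineSpan ℝ ({w, reflect PA w, reflect PB w} : Set (Euc n)) ∧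
    ‖c - w‖ = ‖c - reflect PA w‖ ∧ ‖c - w‖ = ‖c - reflect PB w‖

/-- Under EB1 at the limit point, the distances to `C` along the sequential projection
method with the most violated constraint control converge Q-linearly to `0` with
asymptotic constant at most `β² = 1 - ω²`. -/
lemma proj_inner_le {n : ℕ} {A : Set (Euc n)} (hA : Convex ℝ A) {P : Euc n → Euc n}
    (hP : IsProjection A P) (x a : Euc n) (ha : a ∈ A) :
    ⟪x - P x, a - P x⟫ ≤ 0 := by
  have hPx := (hP x).1
  have hI : ∀ t : ℝ, 0 < t → t ≤ 1 →
      2 * t * ⟪x - P x, a - P x⟫ ≤ t ^ 2 * ‖a - P x‖ ^ 2 := by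
    intro t ht0 ht1
    have hy : (1 - t) • P x + t • a ∈ A := hA hPx ha (by linarith) ht0.le (by ring)
    have hle : ‖x - P x‖ ≤ ‖x - ((1 - t) • P x + t • a)‖ := (hP x).2 _ hy
    have hrw : x - ((1 - t) • P x + t • a) = (x - P x) - t • (a - P x) := by
      module
    rw [hrw] at hle
    have hexp : ‖(x - P x) - t • (a - P x)‖ ^ 2
        = ‖x - P x‖ ^ 2 - 2 * (t * ⟪x - P x, a - P x⟫) + t ^ 2 * ‖a - P x‖ ^ 2 := by
      rw [norm_sub_sq_real, real_inner_smul_right, norm_smul]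
      simp [abs_of_pos ht0]
      ring
    have hsq : ‖x - P x‖ ^ 2 ≤ ‖(x - P x) - t • (a - P x)‖ ^ 2 :=
      pow_le_pow_left₀ (norm_nonneg _) hle 2
    rw [hexp] at hsq
    linarith
  by_contra h
  push_neg at h
  set I := ⟪x - P x, a - P x⟫ with hIdef
  set c := ‖a - P x‖ ^ 2 with hcdef
  have hc0 : 0 ≤ c := sq_nonneg _
  rcases eq_or_lt_of_le hc0 with hc | hc
  · have := hI 1 one_pos le_rfl
    rw [← hc] at this
    linarith
  · set t := min 1 (I / c) with htdef
    have ht0 : 0 < t := lt_min one_pos (div_pos h hc)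
    have ht1 : t ≤ 1 := min_le_left _ _
    have := hI t ht0 ht1
    have htc : t * c ≤ I := by
      calc t * c ≤ (I / c) * c := by
            exact mul_le_mul_of_nonneg_right (min_le_right _ _) hc0
        _ = I := by field_simp
    nlinarith

lemma firm_aux {n : ℕ} {A : Set (Euc n)} (hA : Convex ℝ A) {P : Euc n → Euc n}
    (hP : IsProjection A P) (x a : Euc n) (ha : a ∈ A) :
    ‖P x - a‖ ^ 2 + ‖x - P x‖ ^ 2 ≤ ‖x - a‖ ^ 2 := by
  have hip := proj_inner_le hA hP x a ha
  have expand : ‖x - a‖ ^ 2 = ‖x - P x‖ ^ 2 + 2 * ⟪x - P x, P x - a⟫ + ‖P x - a‖ ^ 2 := by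
    rw [show x - a = (x - P x) + (P x - a) by abel, norm_add_sq_real]
  have hneg : ⟪x - P x, P x - a⟫ = -⟪x - P x, a - P x⟫ := by
    rw [show P x - a = -(a - P x) by abel, inner_neg_right]
  linarith

/-- `infDist` is realized by the projection. -/
lemma proj_infDist {n : ℕ} {A : Set (Euc n)} (hA : IsClosed A) {P : Euc n → Euc n}
    (hP : IsProjection A P) (x : Euc n) : infDist x A = ‖x - P x‖ := by
  obtain ⟨y, hy, hyd⟩ := hA.exists_infDist_eq_dist ⟨P x, (hP x).1⟩ x
  refine le_antisymm ?_ ?_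
  · simpa [dist_eq_norm] using infDist_le_dist_of_mem (hP x).1
  · rw [hyd, dist_eq_norm]; exact (hP x).2 y hy

theorem stmt13 {n m : ℕ} (C : Fin m → Set (Euc n))
    (hCcl : ∀ i, IsClosed (C i)) (hCcv : ∀ i, Convex ℝ (C i))
    (hne : (⋂ i, C i).Nonempty)
    (P : Fin m → Euc n → Euc n) (hP : ∀ i, IsProjection (C i) (P i))
    (ℓ r : ℕ → Fin m) (s : ℕ → Euc n)
    (hs : ∀ k : ℕ, s (k + 1) = P (r k) (P (ℓ k) (s k)))
    (hℓ : ∀ k : ℕ, ∀ i : Fin m, infDist (s k) (C i) ≤ infDist (s k) (C (ℓ k)))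
    (hr : ∀ k : ℕ, ∀ i : Fin m,
      infDist (P (ℓ k) (s k)) (C i) ≤ infDist (P (ℓ k) (s k)) (C (r k)))
    (sbar : Euc n) (hsbar : sbar ∈ ⋂ i, C i)
    (hlim : Tendsto s atTop (nhds sbar))
    (ω : ℝ) (hω : ω ∈ Set.Ioo (0 : ℝ) 1)
    (V : Set (Euc n)) (hV : V ∈ nhds sbar)
    (hEB : ∀ z ∈ V, ω * infDist z (⋂ i, C i) ≤ ⨆ i, infDist z (C i)) :
    Tendsto (fun k => infDist (s k) (⋂ i, C i)) atTop (nhds 0) ∧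
      limsup (fun k => infDist (s (k + 1)) (⋂ i, C i) / infDist (s k) (⋂ i, C i))
          atTop ≤ Real.sqrt (1 - ω ^ 2) ^ 2 := by
  haveI : Nonempty (Fin m) := ⟨ℓ 0⟩
  set K := ⋂ i, C i with hK
  have hKcl : IsClosed K := isClosed_iInter hCcl
  have hβ0 : (0:ℝ) ≤ 1 - ω ^ 2 := by nlinarith [hω.1, hω.2]
  set β : ℝ := Real.sqrt (1 - ω ^ 2) with hβdef
  have hβsq : β ^ 2 = 1 - ω ^ 2 := Real.sq_sqrt hβ0
  -- key one-step contraction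
  have key : ∀ z ∈ V, ∀ j : Fin m, (∀ i, infDist z (C i) ≤ infDist z (C j)) →
      infDist (P j z) K ≤ β * infDist z K := by
    intro z hz j hj
    obtain ⟨c, hcK, hc⟩ := hKcl.exists_infDist_eq_dist hne z
    have hcCj : c ∈ C j := (Set.mem_iInter.mp hcK) j
    set d := infDist z K with hd
    have hd0 : 0 ≤ d := infDist_nonneg
    have h1 : ω * d ≤ infDist z (C j) := (hEB z hz).trans (ciSup_le hj)
    have h2 : infDist (P j z) K ≤ ‖P j z - c‖ := by
      simpa [dist_eq_norm] using infDist_le_dist_of_mem hcK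
    have h3 : ‖P j z - c‖ ^ 2 + ‖z - P j z‖ ^ 2 ≤ ‖z - c‖ ^ 2 :=
      firm_aux (hCcv j) (hP j) z c hcCj
    have h4 : ‖z - c‖ = d := by rw [hc, dist_eq_norm]
    have h5 : ‖z - P j z‖ = infDist z (C j) := (proj_infDist (hCcl j) (hP j) z).symm
    have hω0 : 0 ≤ ω * d := mul_nonneg hω.1.le hd0
    have h6 : infDist (P j z) K ^ 2 ≤ (1 - ω ^ 2) * d ^ 2 := by
      nlinarith [infDist_nonneg (s := K) (x := P j z), norm_nonneg (z - P j z)]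
    calc infDist (P j z) K = Real.sqrt (infDist (P j z) K ^ 2) :=
          (Real.sqrt_sq infDist_nonneg).symm
      _ ≤ Real.sqrt ((1 - ω ^ 2) * d ^ 2) := Real.sqrt_le_sqrt h6
      _ = β * d := by rw [Real.sqrt_mul hβ0, Real.sqrt_sq hd0]
  -- part 1
  have hpart1 : Tendsto (fun k => infDist (s k) K) atTop (nhds 0) := by
    have := ((continuous_infDist_pt K).tendsto sbar).comp hlim
    simpa [Function.comp_def, infDist_zero_of_mem hsbar] using this
  refine ⟨hpart1, ?_⟩
  -- intermediate sequence tends to sbar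
  have hsbarC : ∀ i, sbar ∈ C i := fun i => (Set.mem_iInter.mp hsbar) i
  have hnonexp : ∀ k, dist (P (ℓ k) (s k)) sbar ≤ dist (s k) sbar := by
    intro k
    have := firm_aux (hCcv (ℓ k)) (hP (ℓ k)) (s k) sbar (hsbarC (ℓ k))
    rw [dist_eq_norm, dist_eq_norm]
    nlinarith [norm_nonneg (P (ℓ k) (s k) - sbar), norm_nonneg (s k - sbar)]
  have htend2 : Tendsto (fun k => P (ℓ k) (s k)) atTop (nhds sbar) := by
    rw [tendsto_iff_dist_tendsto_zero]
    refine squeeze_zero (fun k => dist_nonneg) hnonexp ?_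
    simpa [tendsto_iff_dist_tendsto_zero] using hlim
  have hev : ∀ᶠ k in atTop, s k ∈ V ∧ P (ℓ k) (s k) ∈ V :=
    (hlim.eventually (eventually_mem_nhds_iff.mpr hV |>.mono fun x hx => mem_of_mem_nhds hx)).and
      (htend2.eventually (eventually_mem_nhds_iff.mpr hV |>.mono fun x hx => mem_of_mem_nhds hx))
  have hbound : ∀ᶠ k in atTop,
      infDist (s (k + 1)) K / infDist (s k) K ≤ β ^ 2 := by
    filter_upwards [hev] with k ⟨hk1, hk2⟩
    have step1 : infDist (P (ℓ k) (s k)) K ≤ β * infDist (s k) K :=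
      key (s k) hk1 (ℓ k) (hℓ k)
    have step2 : infDist (s (k + 1)) K ≤ β * infDist (P (ℓ k) (s k)) K := by
      rw [hs k]; exact key _ hk2 (r k) (hr k)
    have hβnn : 0 ≤ β := Real.sqrt_nonneg _
    have hchain : infDist (s (k + 1)) K ≤ β ^ 2 * infDist (s k) K := by
      calc infDist (s (k + 1)) K ≤ β * infDist (P (ℓ k) (s k)) K := step2
        _ ≤ β * (β * infDist (s k) K) := by
            exact mul_le_mul_of_nonneg_left step1 hβnn
        _ = β ^ 2 * infDist (s k) K := by ring
    rcases eq_or_lt_of_le (infDist_nonneg (s := K) (x := s k)) with h0 | hpos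
    · rw [← h0, div_zero]; exact sq_nonneg β
    · exact (div_le_iff₀ hpos).mpr hchain
  refine limsup_le_of_le ?_ hbound
  exact isCoboundedUnder_le_of_eventually_le atTop
    (Eventually.of_forall fun k => div_nonneg infDist_nonneg infDist_nonneg)
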